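/- Let M be a symmetric irreducible r×r 0–1 transition matrix and let A : Σ̂_M → ℝ be Lipschitz continuous. Suppose β_n → ∞ and φ_{β_n}/β_n → V uniformly, where φ_β denotes the forward effective potential for βA. Fix y ∈ Σ*_M and let μ_{y,β_n} be the effective probability for β_n A at y. Then any weak* accumulation point μ_y^∞ ∈ M_σ of the sequence (μ_{y,β_n}) is a maximizing probability for A(y,·) + V, that is, ∫ (A(y,·) + V) dμ_y^∞ = max_{μ ∈ M_σ} ∫ (A(y,·) + V) dμ. -/

import Mathlib

open MeasureTheory Filter Topology Real

/-- The one-sided subshift of finite type defined by the 0-1 transition matrix `M`: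
sequences `x : ℕ → Fin r` with `M (x j) (x (j+1)) = 1` for all `j`. -/
abbrev Shift (r : ℕ) (M : Fin r → Fin r → Bool) : Type :=
  {x : ℕ → Fin r // ∀ j : ℕ, M (x j) (x (j + 1)) = true}

variable {r : ℕ} {M : Fin r → Fin r → Bool}

/-- The matrix `M` is irreducible: any symbol can be joined to any other by an
admissible path of positive length. -/
def Irred (M : Fin r → Fin r → Bool) : Prop :=
  ∀ i j : Fin r, ∃ n : ℕ, ∃ w : Fin (n + 2) → Fin r,
    w 0 = i ∧ w (Fin.last (n + 1)) = j ∧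
    ∀ k : Fin (n + 1), M (w k.castSucc) (w k.succ) = true

/-- The left shift map on the subshift. -/
def shiftMap (x : Shift r M) : Shift r M :=
  ⟨fun j => x.1 (j + 1), fun j => x.2 (j + 1)⟩

/-- The metric `d(x,y) = Λ^k`, `k = min { j : x_j ≠ y_j }`, `d(x,x) = 0`. -/
noncomputable def shiftDist (Λ : ℝ) (x y : Shift r M) : ℝ :=
  letI := Classical.decEq (Shift r M)
  if h : x = y then 0
  else Λ ^ Nat.find (show ∃ j : ℕ, x.1 j ≠ y.1 j by
    by_contra hc
    push_neg at hc
    exact h (Subtype.ext (funext hc)))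

/-- `φ` is Lipschitz with constant `K` for the metric `shiftDist Λ`. -/
def LipBnd (Λ K : ℝ) (φ : Shift r M → ℝ) : Prop :=
  ∀ x y : Shift r M, |φ x - φ y| ≤ K * shiftDist Λ x y

/-- `φ` is Lipschitz continuous for the metric `shiftDist Λ`. -/
def IsLip (Λ : ℝ) (φ : Shift r M → ℝ) : Prop :=
  ∃ K : ℝ, LipBnd Λ K φ

/-- The best Lipschitz constant of `φ`. -/
noncomputable def lipC (Λ : ℝ) (φ : Shift r M → ℝ) : ℝ :=
  sInf {K : ℝ | 0 ≤ K ∧ LipBnd Λ K φ}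

/-- The uniform norm `‖φ‖₀`. -/
noncomputable def unorm (φ : Shift r M → ℝ) : ℝ :=
  ⨆ x : Shift r M, |φ x|

/-- An observable on the natural extension `Σ̂_M ⊂ Σ*_M × Σ_M` (with `Σ*_M`
canonically identified with `Σ_M`), as a function of `(y, x)`; it is Lipschitz with
constant `K` for the max-metric. -/
def LipBnd2 (Λ K : ℝ) (A : Shift r M → Shift r M → ℝ) : Prop :=
  ∀ y x y' x' : Shift r M,
    |A y x - A y' x'| ≤ K * max (shiftDist Λ y y') (shiftDist Λ x x')

/-- `A` is Lipschitz continuous on `Σ̂_M`. -/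
def IsLip2 (Λ : ℝ) (A : Shift r M → Shift r M → ℝ) : Prop :=
  ∃ K : ℝ, LipBnd2 Λ K A

/-- The best Lipschitz constant of the observable `A`. -/
noncomputable def lipC2 (Λ : ℝ) (A : Shift r M → Shift r M → ℝ) : ℝ :=
  sInf {K : ℝ | 0 ≤ K ∧ LipBnd2 Λ K A}

/-- The uniform norm `‖A‖₀` of the observable. -/
noncomputable def unorm2 (A : Shift r M → Shift r M → ℝ) : ℝ :=
  ⨆ p : Shift r M × Shift r M, |A p.1 p.2|

/-- `μ` is a `σ`-invariant Borel probability measure on the subshift. -/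
def InvProb (μ : Measure (Shift r M)) : Prop :=
  IsProbabilityMeasure μ ∧ μ.map shiftMap = μ

/-- Entropy of the cylinder partition of length `n`:
`H_n(μ) = - ∑_{|w| = n} μ([w]) log μ([w])`. -/
noncomputable def cylEnt (μ : Measure (Shift r M)) (n : ℕ) : ℝ :=
  ∑ w : Fin n → Fin r,
    Real.negMulLog ((μ {x : Shift r M | ∀ i : Fin n, x.1 i.1 = w i}).toReal)

/-- The Kolmogorov–Sinai entropy `h_μ(σ)` of an invariant measure on the subshift:
since the cylinder partition is generating and `n ↦ H_n(μ)` is subadditive,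
`h_μ(σ) = lim_n H_n(μ)/n = inf_n H_n(μ)/n`. -/
noncomputable def entropy (μ : Measure (Shift r M)) : ℝ :=
  ⨅ n : ℕ, cylEnt μ (n + 1) / (n + 1)

/-- The operator
`G⁺_A(φ)(y) = sup_{μ ∈ M_σ} [ ∫ (A(y,x) + φ(x)) dμ(x) + h_μ(σ) ]`. -/
noncomputable def Gplus (A : Shift r M → Shift r M → ℝ)
    (φ : Shift r M → ℝ) (y : Shift r M) : ℝ :=
  sSup {t : ℝ | ∃ μ : Measure (Shift r M), InvProb μ ∧
    t = ∫ x, (A y x + φ x) ∂μ + entropy μ}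

/-- The maximal ergodic average `max_{μ ∈ M_σ} ∫ B dμ`. -/
noncomputable def maxErg (B : Shift r M → ℝ) : ℝ :=
  sSup {t : ℝ | ∃ μ : Measure (Shift r M), InvProb μ ∧ t = ∫ x, B x ∂μ}

/-- The quotient norm on functions modulo additive constants:
`‖g‖_c = inf_{γ ∈ ℝ} ‖g + γ‖₀`. -/
noncomputable def cnorm (g : Shift r M → ℝ) : ℝ :=
  ⨅ γ : ℝ, unorm (fun x => g x + γ)

section Helpers

instance : BorelSpace (Shift r M) :=
  Subtype.borelSpace {x : ℕ → Fin r | ∀ j : ℕ, M (x j) (x (j + 1)) = true}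

instance : CompactSpace (Shift r M) := by
  have h : {x : ℕ → Fin r | ∀ j : ℕ, M (x j) (x (j + 1)) = true}
      = ⋂ j : ℕ, {x : ℕ → Fin r | M (x j) (x (j + 1)) = true} := by
    ext x; simp [Set.mem_iInter]
  have hcl : IsClosed {x : ℕ → Fin r | ∀ j : ℕ, M (x j) (x (j + 1)) = true} := by
    rw [h]
    refine isClosed_iInter fun j => ?_
    have hc : Continuous ((fun p : Fin r × Fin r => M p.1 p.2) ∘ fun x : ℕ → Fin r => (x j, x (j + 1))) :=
      continuous_of_discreteTopology.comp ((continuous_apply j).prodMk (continuous_apply (j + 1)))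
    exact (isClosed_singleton (x := true)).preimage hc
  exact isCompact_iff_compactSpace.mp hcl.isCompact

lemma shiftDist_nonneg {Λ : ℝ} (hΛ : 0 < Λ) (x y : Shift r M) : 0 ≤ shiftDist Λ x y := by
  unfold shiftDist
  split
  · exact le_rfl
  · exact (pow_pos hΛ _).le

lemma shiftDist_le_pow {Λ : ℝ} (hΛ0 : 0 < Λ) (hΛ1 : Λ ≤ 1) {k : ℕ} {x y : Shift r M}
    (hag : ∀ j < k, x.1 j = y.1 j) : shiftDist Λ x y ≤ Λ ^ k := by
  unfold shiftDist
  split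
  · exact (pow_pos hΛ0 k).le
  · next h =>
    refine pow_le_pow_of_le_one hΛ0.le hΛ1 ?_
    rw [Nat.le_find_iff]
    intro m hm
    simpa using hag m hm

lemma shiftDist_le_one {Λ : ℝ} (hΛ0 : 0 < Λ) (hΛ1 : Λ ≤ 1) (x y : Shift r M) :
    shiftDist Λ x y ≤ 1 := by
  simpa using shiftDist_le_pow hΛ0 hΛ1 (k := 0) (x := x) (y := y) (by omega)

lemma continuous_of_lipBnd {Λ K : ℝ} (hΛ0 : 0 < Λ) (hΛ1 : Λ < 1) {φ : Shift r M → ℝ}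
    (h : LipBnd Λ K φ) : Continuous φ := by
  have h' : LipBnd Λ (max K 0) φ := fun x y =>
    (h x y).trans (mul_le_mul_of_nonneg_right (le_max_left _ _) (shiftDist_nonneg hΛ0 x y))
  set K' := max K 0 with hK'
  have hK0 : 0 ≤ K' := le_max_right _ _
  rw [continuous_iff_continuousAt]
  intro x
  rw [ContinuousAt, Metric.tendsto_nhds]
  intro ε hε
  have hlim : Filter.Tendsto (fun k : ℕ => K' * Λ ^ k) Filter.atTop (𝓝 0) := by
    simpa using tendsto_const_nhds.mul (tendsto_pow_atTop_nhds_zero_of_lt_one hΛ0.le hΛ1)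
  obtain ⟨k, hk⟩ := (hlim.eventually (gt_mem_nhds hε)).exists
  have hop : IsOpen (⋂ j ∈ Finset.range k, {z : Shift r M | z.1 j = x.1 j}) := by
    refine isOpen_biInter_finset fun j _ => ?_
    have hcj : Continuous fun z : Shift r M => z.1 j :=
      (continuous_apply j).comp continuous_subtype_val
    exact (isOpen_discrete ({x.1 j} : Set (Fin r))).preimage hcj
  have hmem : x ∈ ⋂ j ∈ Finset.range k, {z : Shift r M | z.1 j = x.1 j} :=
    Set.mem_iInter₂.2 fun j _ => rfl
  filter_upwards [hop.mem_nhds hmem] with z hz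
  have hag : ∀ j < k, z.1 j = x.1 j := fun j hj =>
    Set.mem_iInter₂.1 hz j (Finset.mem_range.2 hj)
  have hb : |φ z - φ x| ≤ K' * Λ ^ k :=
    (h' z x).trans (mul_le_mul_of_nonneg_left (shiftDist_le_pow hΛ0 hΛ1.le hag) hK0)
  rw [Real.dist_eq]
  exact lt_of_le_of_lt hb hk

lemma cont_integrable {f : Shift r M → ℝ} (hf : Continuous f) (m : Measure (Shift r M))
    [IsFiniteMeasure m] : Integrable f m := by
  obtain ⟨C, hC⟩ := isCompact_univ.exists_bound_of_continuousOn hf.continuousOn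
  exact ⟨hf.aestronglyMeasurable,
    HasFiniteIntegral.of_bounded (C := C) (Filter.Eventually.of_forall fun x => hC x trivial)⟩

lemma exists_bound {f : Shift r M → ℝ} (hf : Continuous f) : ∃ C : ℝ, ∀ x, |f x| ≤ C := by
  obtain ⟨C, hC⟩ := isCompact_univ.exists_bound_of_continuousOn hf.continuousOn
  exact ⟨C, fun x => by simpa [Real.norm_eq_abs] using hC x trivial⟩

lemma integral_le_bound {f : Shift r M → ℝ} (hf : Continuous f) {C : ℝ} (hC : ∀ x, f x ≤ C)
    (m : Measure (Shift r M)) [IsProbabilityMeasure m] : ∫ x, f x ∂m ≤ C := by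
  calc ∫ x, f x ∂m ≤ ∫ _x, C ∂m :=
        integral_mono (cont_integrable hf m) (integrable_const C) hC
    _ = C := by simp

lemma negMulLog_le_one {p : ℝ} (hp : 0 ≤ p) : Real.negMulLog p ≤ 1 := by
  rcases eq_or_lt_of_le hp with h | h
  · simp [← h, Real.negMulLog]
  · have hlog : Real.log p⁻¹ ≤ p⁻¹ - 1 := Real.log_le_sub_one_of_pos (inv_pos.2 h)
    have heq : Real.negMulLog p = p * Real.log p⁻¹ := by
      rw [Real.negMulLog, Real.log_inv]; ring
    rw [heq]
    calc p * Real.log p⁻¹ ≤ p * (p⁻¹ - 1) := mul_le_mul_of_nonneg_left hlog hp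
      _ = 1 - p := by field_simp
      _ ≤ 1 := by linarith

lemma toReal_prob_le_one (m : Measure (Shift r M)) [IsProbabilityMeasure m]
    (s : Set (Shift r M)) : (m s).toReal ≤ 1 := by
  have := ENNReal.toReal_mono (by simp) (prob_le_one (μ := m) (s := s))
  simpa using this

lemma cylEnt_nonneg (m : Measure (Shift r M)) [IsProbabilityMeasure m] (n : ℕ) :
    0 ≤ cylEnt m n := by
  refine Finset.sum_nonneg fun w _ => ?_
  exact Real.negMulLog_nonneg ENNReal.toReal_nonneg (toReal_prob_le_one m _)

lemma entropy_nonneg (m : Measure (Shift r M)) [IsProbabilityMeasure m] : 0 ≤ entropy m :=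
  le_ciInf fun n => div_nonneg (cylEnt_nonneg m _) (by positivity)

lemma entropy_le (m : Measure (Shift r M)) [IsProbabilityMeasure m] : entropy m ≤ (r : ℝ) := by
  have hbdd : BddBelow (Set.range fun n : ℕ => cylEnt m (n + 1) / ((n : ℝ) + 1)) := by
    refine ⟨0, ?_⟩
    rintro t ⟨n, rfl⟩
    exact div_nonneg (cylEnt_nonneg m _) (by positivity)
  have h0 : entropy m ≤ cylEnt m (0 + 1) / ((0 : ℕ) + 1 : ℝ) := ciInf_le hbdd 0
  have h1 : cylEnt m 1 ≤ (r : ℝ) := by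
    unfold cylEnt
    have := Finset.sum_le_card_nsmul (Finset.univ : Finset (Fin 1 → Fin r))
      (fun w => Real.negMulLog ((m {x : Shift r M | ∀ i : Fin 1, x.1 i.1 = w i}).toReal)) 1
      (fun w _ => negMulLog_le_one ENNReal.toReal_nonneg)
    simpa [Fintype.card_fun] using this
  calc entropy m ≤ cylEnt m (0 + 1) / ((0 : ℕ) + 1 : ℝ) := h0
    _ = cylEnt m 1 := by norm_num
    _ ≤ (r : ℝ) := h1

end Helpers

/-- Suppose `β_n → ∞` and `φ_{β_n}/β_n → V` uniformly, where `φ_β` is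
the forward effective potential for `βA`. Fix `y` and let `μ_{y,β_n}` be the effective
probability for `β_n A` at `y` (the invariant measure attaining the supremum defining
`G⁺_{β_n A}(φ_{β_n})(y)`). Then any weak* accumulation point `ν ∈ M_σ` of `(μ_{y,β_n})`
is a maximizing probability for `A(y,·) + V`:
`∫ (A(y,·) + V) dν = max_{μ ∈ M_σ} ∫ (A(y,·) + V) dμ`. -/
theorem accumulation_point_is_maximizing
    (r : ℕ) (hr : 2 ≤ r) (M : Fin r → Fin r → Bool)
    (hSym : ∀ i j, M i j = M j i) (hIrr : Irred M)
    (Λ : ℝ) (hΛ : Λ ∈ Set.Ioo (0 : ℝ) 1)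
    (A : Shift r M → Shift r M → ℝ) (hA : IsLip2 Λ A)
    (φ : ℝ → Shift r M → ℝ) (lam : ℝ → ℝ)
    (heff : ∀ β > (0 : ℝ), IsLip Λ (φ β) ∧
      ∀ y, Gplus (fun y x => β * A y x) (φ β) y = φ β y + lam β)
    (b : ℕ → ℝ) (hb : ∀ n, 0 < b n) (hbtop : Filter.Tendsto b Filter.atTop Filter.atTop)
    (V : Shift r M → ℝ)
    (hV : TendstoUniformly (fun n x => φ (b n) x / b n) V Filter.atTop)
    (y : Shift r M)
    (μseq : ℕ → Measure (Shift r M))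
    (hμ : ∀ n, InvProb (μseq n) ∧
      ∫ x, (b n * A y x + φ (b n) x) ∂(μseq n) + entropy (μseq n)
        = Gplus (fun y x => b n * A y x) (φ (b n)) y)
    (ν : Measure (Shift r M)) (hν : InvProb ν)
    (hacc : ∃ ι : ℕ → ℕ, StrictMono ι ∧ ∀ f : Shift r M → ℝ, Continuous f →
      Filter.Tendsto (fun k => ∫ x, f x ∂(μseq (ι k))) Filter.atTop
        (𝓝 (∫ x, f x ∂ν))) :
    ∫ x, (A y x + V x) ∂ν =
      sSup {t : ℝ | ∃ μ : Measure (Shift r M), InvProb μ ∧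
        t = ∫ x, (A y x + V x) ∂μ} := by
  obtain ⟨ι, hιmono, hιlim⟩ := hacc
  obtain ⟨hΛ0, hΛ1⟩ := hΛ
  obtain ⟨KA, hKA⟩ := hA
  -- continuity facts
  have hdyy : shiftDist Λ y y = 0 := by unfold shiftDist; simp
  have hLipAy : LipBnd Λ KA fun x => A y x := by
    intro x x'
    have h := hKA y x y x'
    rw [hdyy, max_eq_right (shiftDist_nonneg hΛ0 x x')] at h
    exact h
  have hAyc : Continuous fun x => A y x := continuous_of_lipBnd hΛ0 hΛ1 hLipAy
  have hφc : ∀ n, Continuous (φ (b n)) := by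
    intro n
    obtain ⟨K, hK⟩ := (heff (b n) (hb n)).1
    exact continuous_of_lipBnd hΛ0 hΛ1 hK
  have hVc : Continuous V :=
    hV.continuous (Filter.Eventually.of_forall fun n => (hφc n).div_const (b n)).frequently
  have hfc : Continuous fun x => A y x + V x := hAyc.add hVc
  have hgc : ∀ n, Continuous fun x => A y x + φ (b n) x / b n := fun n =>
    hAyc.add ((hφc n).div_const _)
  have hιtop : Filter.Tendsto ι Filter.atTop Filter.atTop := hιmono.tendsto_atTop
  have hbι : Filter.Tendsto (fun k => b (ι k)) Filter.atTop Filter.atTop := hbtop.comp hιtop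
  have hunif := Metric.tendstoUniformly_iff.1 hV
  -- rewriting lemma
  have hrw : ∀ n (m : Measure (Shift r M)),
      ∫ x, (b n * A y x + φ (b n) x) ∂m = b n * ∫ x, (A y x + φ (b n) x / b n) ∂m := by
    intro n m
    rw [← integral_const_mul]
    congr 1
    funext x
    rw [mul_add, mul_div_cancel₀ _ (hb n).ne']
  -- integral comparison under uniform closeness
  have intlemma : ∀ (m : Measure (Shift r M)), IsProbabilityMeasure m → ∀ n, ∀ ε : ℝ, 0 < ε →
      (∀ x, dist (V x) (φ (b n) x / b n) < ε) →
      |∫ x, (A y x + φ (b n) x / b n) ∂m - ∫ x, (A y x + V x) ∂m| ≤ ε := by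
    intro m hm n ε hε hd
    haveI := hm
    rw [← integral_sub (cont_integrable (hgc n) m) (cont_integrable hfc m)]
    have habs : |∫ x, ((A y x + φ (b n) x / b n) - (A y x + V x)) ∂m|
        ≤ ∫ x, |(A y x + φ (b n) x / b n) - (A y x + V x)| ∂m := by
      simpa [Real.norm_eq_abs] using norm_integral_le_integral_norm (μ := m)
        (f := fun x => (A y x + φ (b n) x / b n) - (A y x + V x))
    refine habs.trans ?_
    have hpt : ∀ x, |(A y x + φ (b n) x / b n) - (A y x + V x)| ≤ ε := by
      intro x
      have h := (hd x).le
      rw [Real.dist_eq] at h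
      have heq : (A y x + φ (b n) x / b n) - (A y x + V x) = -(V x - φ (b n) x / b n) := by ring
      rw [heq, abs_neg]
      exact h
    calc ∫ x, |(A y x + φ (b n) x / b n) - (A y x + V x)| ∂m
        ≤ ∫ _x, ε ∂m := integral_mono
          (((cont_integrable (hgc n) m).sub (cont_integrable hfc m)).abs)
          (integrable_const ε) hpt
      _ = ε := by simp
  -- the main comparison: any invariant measure gives a smaller ergodic average
  have main : ∀ (μ0 : Measure (Shift r M)), InvProb μ0 →
      ∫ x, (A y x + V x) ∂μ0 ≤ ∫ x, (A y x + V x) ∂ν := by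
    intro μ0 hμ0
    haveI := hμ0.1
    have key : ∀ n, ∫ x, (b n * A y x + φ (b n) x) ∂μ0 + entropy μ0 ≤
        ∫ x, (b n * A y x + φ (b n) x) ∂(μseq n) + entropy (μseq n) := by
      intro n
      rw [(hμ n).2]
      unfold Gplus
      refine le_csSup ?_ ⟨μ0, hμ0, rfl⟩
      obtain ⟨C, hC⟩ := exists_bound (show Continuous fun x => b n * A y x + φ (b n) x from
        (continuous_const.mul hAyc).add (hφc n))
      refine ⟨C + r, ?_⟩
      rintro t ⟨m, hm, rfl⟩
      haveI := hm.1
      exact add_le_add (integral_le_bound ((continuous_const.mul hAyc).add (hφc n))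
        (fun x => (abs_le.1 (hC x)).2) m) (entropy_le m)
    have key2 : ∀ k, ∫ x, (A y x + φ (b (ι k)) x / b (ι k)) ∂μ0 + entropy μ0 / b (ι k) ≤
        ∫ x, (A y x + φ (b (ι k)) x / b (ι k)) ∂(μseq (ι k))
          + entropy (μseq (ι k)) / b (ι k) := by
      intro k
      have h := key (ι k)
      rw [hrw (ι k) μ0, hrw (ι k) (μseq (ι k))] at h
      have hbn : (0:ℝ) < b (ι k) := hb (ι k)
      have h2 := div_le_div_of_nonneg_right h hbn.le
      rwa [add_div, add_div, mul_div_cancel_left₀ _ hbn.ne', mul_div_cancel_left₀ _ hbn.ne'] at h2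
    -- limits
    have h1 : Filter.Tendsto (fun k => ∫ x, (A y x + φ (b (ι k)) x / b (ι k)) ∂μ0)
        Filter.atTop (𝓝 (∫ x, (A y x + V x) ∂μ0)) := by
      refine Metric.tendsto_nhds.2 fun ε hε => ?_
      filter_upwards [hιtop.eventually (hunif (ε/2) (half_pos hε))] with k hk
      have := intlemma μ0 hμ0.1 (ι k) (ε/2) (half_pos hε) hk
      rw [Real.dist_eq]
      linarith
    have h2 : Filter.Tendsto (fun k => ∫ x, (A y x + φ (b (ι k)) x / b (ι k)) ∂(μseq (ι k))
        - ∫ x, (A y x + V x) ∂(μseq (ι k))) Filter.atTop (𝓝 0) := by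
      refine Metric.tendsto_nhds.2 fun ε hε => ?_
      filter_upwards [hιtop.eventually (hunif (ε/2) (half_pos hε))] with k hk
      have := intlemma (μseq (ι k)) (hμ (ι k)).1.1 (ι k) (ε/2) (half_pos hε) hk
      rw [Real.dist_eq, sub_zero]
      linarith
    have h3 : Filter.Tendsto (fun k => ∫ x, (A y x + V x) ∂(μseq (ι k)))
        Filter.atTop (𝓝 (∫ x, (A y x + V x) ∂ν)) := hιlim _ hfc
    have h4 : Filter.Tendsto (fun k => ∫ x, (A y x + φ (b (ι k)) x / b (ι k)) ∂(μseq (ι k)))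
        Filter.atTop (𝓝 (∫ x, (A y x + V x) ∂ν)) := by
      have := h2.add h3
      simpa using this
    have hH0 : Filter.Tendsto (fun k => entropy μ0 / b (ι k)) Filter.atTop (𝓝 0) :=
      Filter.Tendsto.div_atTop tendsto_const_nhds hbι
    have hHn : Filter.Tendsto (fun k => entropy (μseq (ι k)) / b (ι k)) Filter.atTop (𝓝 0) := by
      refine squeeze_zero (fun k => ?_) (fun k => ?_)
        (Filter.Tendsto.div_atTop (tendsto_const_nhds (x := (r:ℝ))) hbι)
      · haveI := (hμ (ι k)).1.1
        exact div_nonneg (entropy_nonneg _) (hb _).le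
      · haveI := (hμ (ι k)).1.1
        exact div_le_div_of_nonneg_right (entropy_le _) (hb _).le
    have := le_of_tendsto_of_tendsto' (h1.add hH0) (h4.add hHn) key2
    simpa using this
  obtain ⟨Cf, hCf⟩ := exists_bound hfc
  have hmemS : (∫ x, (A y x + V x) ∂ν) ∈ {t : ℝ | ∃ μ : Measure (Shift r M), InvProb μ ∧
      t = ∫ x, (A y x + V x) ∂μ} := ⟨ν, hν, rfl⟩
  refine le_antisymm (le_csSup ?_ hmemS) (csSup_le ⟨_, hmemS⟩ ?_)
  · refine ⟨Cf, ?_⟩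
    rintro t ⟨μ0, hμ0, rfl⟩
    haveI := hμ0.1
    exact integral_le_bound hfc (fun x => (abs_le.1 (hCf x)).2) μ0
  · rintro t ⟨μ0, hμ0, rfl⟩
    exact main μ0 hμ0
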